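/- The quadratic function F(θ₁,…,θₙ) = (1/2)·Σ_{1≤i<j≤n} [θᵢ² + (θⱼ - θᵢ)² + (1 - θⱼ)²] on ℝⁿ has gradient zero exactly at the point θᵢ = (n + 2(i-1))/(4n-2) for i = 1,…,n, and this point is its unique global minimizer. -/

import Mathlib

open MeasureTheory Set

/-- `F(θ) = (1/2)·Σ_{i<j} [θᵢ² + (θⱼ - θᵢ)² + (1 - θⱼ)²]`. -/
noncomputable def invSum (n : ℕ) (θ : Fin n → ℝ) : ℝ :=
  (1/2) * ∑ i : Fin n, ∑ j : Fin n,
    (if i < j then (θ i)^2 + (θ j - θ i)^2 + (1 - θ j)^2 else 0)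

/-- `θᵢ = (n + 2(i-1))/(4n-2)` (0-indexed). -/
noncomputable def θstar (n : ℕ) (i : Fin n) : ℝ := ((n : ℝ) + 2 * (i : ℕ)) / (4 * n - 2)

/-- The pure quadratic part. -/
noncomputable def Qf (n : ℕ) (v : Fin n → ℝ) : ℝ :=
  (1/2) * ∑ i : Fin n, ∑ j : Fin n,
    (if i < j then v i * v i + (v j - v i) * (v j - v i) + v j * v j else 0)

/-- Derivative candidate for `Qf`. -/
noncomputable def pj (n : ℕ) (i : Fin n) : (Fin n → ℝ) →L[ℝ] ℝ :=
  ContinuousLinearMap.proj i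

noncomputable def Df (n : ℕ) (v : Fin n → ℝ) : (Fin n → ℝ) →L[ℝ] ℝ :=
  (1/2 : ℝ) • ∑ i : Fin n, ∑ j : Fin n,
    (if i < j then
      (v i • pj n i + v i • pj n i)
      + ((v j - v i) • (pj n j - pj n i) + (v j - v i) • (pj n j - pj n i))
      + (v j • pj n j + v j • pj n j)
     else 0)

lemma gauss (n : ℕ) : ∑ j : Fin n, ((j:ℕ):ℝ) = ((n:ℝ)^2 - n)/2 := by
  rw [Fin.sum_univ_eq_sum_range (fun j => ((j:ℕ):ℝ))]
  have h := Finset.sum_range_id_mul_two n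
  have h2 : ((∑ i ∈ Finset.range n, i : ℕ) : ℝ) * 2 = ((n*(n-1) : ℕ):ℝ) := by
    exact_mod_cast congrArg (Nat.cast : ℕ → ℝ) h
  rcases Nat.eq_zero_or_pos n with h0|h0
  · simp [h0]
  · have : ((n*(n-1):ℕ):ℝ) = (n:ℝ)^2 - n := by
      have h1 : (1:ℕ) ≤ n := h0
      push_cast [Nat.cast_sub h1]
      ring
    rw [this] at h2
    push_cast at h2 ⊢
    linarith

lemma card_lt (n : ℕ) (i : Fin n) : ∑ j : Fin n, (if j < i then (1:ℝ) else 0) = i := by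
  rw [Finset.sum_boole]
  norm_num
  have : Finset.filter (fun x => x < i) Finset.univ = Finset.Iio i := by
    ext x; simp
  rw [this, Fin.card_Iio]

lemma sum_θstar (n : ℕ) (hn : 1 ≤ n) : ∑ j : Fin n, θstar n j = (n:ℝ)/2 := by
  have hd : (4*(n:ℝ) - 2) ≠ 0 := by
    have : (1:ℝ) ≤ n := by exact_mod_cast hn
    nlinarith
  unfold θstar
  rw [← Finset.sum_div, Finset.sum_add_distrib, Finset.sum_const, ← Finset.mul_sum, gauss]
  simp only [Finset.card_univ, Fintype.card_fin, nsmul_eq_mul]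
  have hd2 : (n:ℝ)*4 - 2 ≠ 0 := by rwa [mul_comm] at hd
  field_simp
  ring

lemma inner_zero (n : ℕ) (hn : 1 ≤ n) (i : Fin n) :
    ∑ j : Fin n, ((if i < j then 2*θstar n i - θstar n j else 0)
      + (if j < i then 2*θstar n i - θstar n j - 1 else 0)) = 0 := by
  have hpt : ∀ j : Fin n,
      (if i < j then 2*θstar n i - θstar n j else 0)
        + (if j < i then 2*θstar n i - θstar n j - 1 else 0)
      = (2*θstar n i - θstar n j)
        - (if j = i then 2*θstar n i - θstar n j else 0)
        - (if j < i then (1:ℝ) else 0) := by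
    intro j
    rcases lt_trichotomy i j with h|h|h
    · simp [h, h.ne', asymm h]
    · subst h; simp
    · simp [h, h.ne, asymm h]
  rw [Finset.sum_congr rfl (fun j _ => hpt j)]
  rw [Finset.sum_sub_distrib, Finset.sum_sub_distrib, Finset.sum_sub_distrib,
    Finset.sum_const, Finset.sum_ite_eq' Finset.univ i (fun j => 2*θstar n i - θstar n j),
    card_lt, sum_θstar n hn]
  simp only [Finset.mem_univ, if_true, Finset.card_univ, Fintype.card_fin, nsmul_eq_mul]
  have hd : (4*(n:ℝ) - 2) ≠ 0 := by
    have : (1:ℝ) ≤ n := by exact_mod_cast hn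
    nlinarith
  unfold θstar
  have hd2 : (n:ℝ)*4 - 2 ≠ 0 := by rwa [mul_comm] at hd
  field_simp
  ring

/-- Key identity. -/
lemma key (n : ℕ) (hn : 1 ≤ n) (θ : Fin n → ℝ) :
    invSum n θ = invSum n (θstar n) + Qf n (fun i => θ i - θstar n i) := by
  set T := θstar n with hT
  set v : Fin n → ℝ := fun i => θ i - T i with hv
  have step : ∀ i j : Fin n,
      (if i < j then (θ i)^2 + (θ j - θ i)^2 + (1 - θ j)^2 else 0)
      = (if i < j then (T i)^2 + (T j - T i)^2 + (1 - T j)^2 else 0)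
        + (if i < j then v i * v i + (v j - v i) * (v j - v i) + v j * v j else 0)
        + ((if i < j then 2*(2*T i - T j) * v i else 0)
           + (if i < j then 2*(2*T j - T i - 1) * v j else 0)) := by
    intro i j
    have hvi : θ i = T i + v i := by simp [hv]
    have hvj : θ j = T j + v j := by simp [hv]
    split_ifs with h
    · rw [hvi, hvj]; ring
    · ring
  have cross : ∑ i : Fin n, ∑ j : Fin n,
      ((if i < j then 2*(2*T i - T j) * v i else 0)
        + (if i < j then 2*(2*T j - T i - 1) * v j else 0)) = 0 := by
    have swap : ∑ i : Fin n, ∑ j : Fin n, (if i < j then 2*(2*T j - T i - 1) * v j else 0)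
        = ∑ i : Fin n, ∑ j : Fin n, (if j < i then 2*(2*T i - T j - 1) * v i else 0) := by
      rw [Finset.sum_comm]
    rw [Finset.sum_congr rfl (fun i _ => Finset.sum_add_distrib), Finset.sum_add_distrib, swap,
      ← Finset.sum_add_distrib]
    rw [Finset.sum_congr rfl (fun i _ => (Finset.sum_add_distrib).symm)]
    have hrow : ∀ i : Fin n, ∑ j : Fin n,
        ((if i < j then 2*(2*T i - T j) * v i else 0)
          + (if j < i then 2*(2*T i - T j - 1) * v i else 0)) = 0 := by
      intro i
      have hpt : ∀ j : Fin n,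
          (if i < j then 2*(2*T i - T j) * v i else 0)
            + (if j < i then 2*(2*T i - T j - 1) * v i else 0)
          = ((if i < j then 2*T i - T j else 0) + (if j < i then 2*T i - T j - 1 else 0)) * (2 * v i) := by
        intro j; split_ifs <;> ring
      rw [Finset.sum_congr rfl (fun j _ => hpt j), ← Finset.sum_mul, inner_zero n hn i, zero_mul]
    rw [Finset.sum_congr rfl (fun i _ => hrow i), Finset.sum_const_zero]
  unfold invSum Qf
  rw [Finset.sum_congr rfl (fun i _ => Finset.sum_congr rfl (fun j _ => step i j))]
  rw [Finset.sum_congr rfl (fun i _ => Finset.sum_add_distrib), Finset.sum_add_distrib]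
  rw [Finset.sum_congr rfl (fun i _ => Finset.sum_add_distrib), Finset.sum_add_distrib]
  rw [cross]
  ring

lemma Qf_nonneg (n : ℕ) (v : Fin n → ℝ) : 0 ≤ Qf n v := by
  unfold Qf
  have : ∀ i j : Fin n, 0 ≤ (if i < j then v i * v i + (v j - v i) * (v j - v i) + v j * v j else 0) := by
    intro i j; split_ifs
    · nlinarith [mul_self_nonneg (v i), mul_self_nonneg (v j - v i), mul_self_nonneg (v j)]
    · exact le_refl 0
  have h1 : 0 ≤ ∑ i : Fin n, ∑ j : Fin n,
      (if i < j then v i * v i + (v j - v i) * (v j - v i) + v j * v j else 0) :=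
    Finset.sum_nonneg (fun i _ => Finset.sum_nonneg (fun j _ => this i j))
  linarith

lemma Qf_pos (n : ℕ) (hn : 2 ≤ n) (v : Fin n → ℝ) (hv : v ≠ 0) : 0 < Qf n v := by
  have hterm : ∀ i j : Fin n,
      0 ≤ (if i < j then v i * v i + (v j - v i) * (v j - v i) + v j * v j else 0) := by
    intro i j; split_ifs
    · nlinarith [mul_self_nonneg (v i), mul_self_nonneg (v j - v i), mul_self_nonneg (v j)]
    · exact le_refl 0
  obtain ⟨i, hi⟩ : ∃ i, v i ≠ 0 := by
    by_contra h; push_neg at h; exact hv (funext h)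
  have hvi : 0 < v i * v i := mul_self_pos.mpr hi
  -- choose a pair (a,b), a < b, whose term dominates v i * v i
  obtain ⟨a, b, hab, hdom⟩ : ∃ a b : Fin n, a < b ∧
      v i * v i ≤ v a * v a + (v b - v a) * (v b - v a) + v b * v b := by
    by_cases h : (i : ℕ) < n - 1
    · refine ⟨i, ⟨n-1, by omega⟩, ?_, ?_⟩
      · exact Fin.lt_def.mpr (by simpa using h)
      · nlinarith [mul_self_nonneg (v ⟨n-1, by omega⟩ - v i), mul_self_nonneg (v ⟨n-1, by omega⟩)]
    · refine ⟨⟨0, by omega⟩, i, ?_, ?_⟩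
      · exact Fin.lt_def.mpr (by simp; omega)
      · nlinarith [mul_self_nonneg (v i - v ⟨0, by omega⟩), mul_self_nonneg (v ⟨0, by omega⟩)]
  have h1 : v i * v i ≤ ∑ j : Fin n, (if a < j then v a * v a + (v j - v a) * (v j - v a) + v j * v j else 0) := by
    calc v i * v i ≤ (if a < b then v a * v a + (v b - v a) * (v b - v a) + v b * v b else 0) := by
          rw [if_pos hab]; exact hdom
      _ ≤ _ := Finset.single_le_sum (fun j _ => hterm a j) (Finset.mem_univ b)
  have h2 : v i * v i ≤ ∑ x : Fin n, ∑ j : Fin n,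
      (if x < j then v x * v x + (v j - v x) * (v j - v x) + v j * v j else 0) :=
    le_trans h1 (Finset.single_le_sum
      (fun x _ => Finset.sum_nonneg (fun j _ => hterm x j)) (Finset.mem_univ a))
  unfold Qf; linarith

lemma hasFDerivAt_Qf (n : ℕ) (v : Fin n → ℝ) : HasFDerivAt (Qf n) (Df n v) v := by
  have hS : HasFDerivAt (fun w : Fin n → ℝ => ∑ i : Fin n, ∑ j : Fin n,
      (if i < j then w i * w i + (w j - w i) * (w j - w i) + w j * w j else 0))
      (∑ i : Fin n, ∑ j : Fin n,
        (if i < j then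
          (v i • pj n i + v i • pj n i)
          + ((v j - v i) • (pj n j - pj n i) + (v j - v i) • (pj n j - pj n i))
          + (v j • pj n j + v j • pj n j)
         else 0)) v := by
    apply HasFDerivAt.fun_sum
    intro i _
    apply HasFDerivAt.fun_sum
    intro j _
    by_cases h : i < j
    · simp only [if_pos h]
      have hi : HasFDerivAt (fun w : Fin n → ℝ => w i) (pj n i) v :=
        (ContinuousLinearMap.proj i : (Fin n → ℝ) →L[ℝ] ℝ).hasFDerivAt
      have hj : HasFDerivAt (fun w : Fin n → ℝ => w j) (pj n j) v :=
        (ContinuousLinearMap.proj j : (Fin n → ℝ) →L[ℝ] ℝ).hasFDerivAt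
      have hji := hj.sub hi
      exact ((hi.mul hi).add (hji.mul hji)).add (hj.mul hj)
    · simp only [if_neg h]
      exact hasFDerivAt_const 0 v
  have := hS.const_mul (1/2 : ℝ)
  exact this

lemma pj_apply (n : ℕ) (i : Fin n) (w : Fin n → ℝ) : pj n i w = w i := rfl

lemma Df_apply_self (n : ℕ) (v : Fin n → ℝ) : Df n v v = 2 * Qf n v := by
  have hpt : ∀ i j : Fin n,
      ((if i < j then
        (v i • pj n i + v i • pj n i)
        + ((v j - v i) • (pj n j - pj n i) + (v j - v i) • (pj n j - pj n i))
        + (v j • pj n j + v j • pj n j)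
       else 0) : (Fin n → ℝ) →L[ℝ] ℝ) v
      = 2 * (if i < j then v i * v i + (v j - v i) * (v j - v i) + v j * v j else 0) := by
    intro i j; split_ifs with h
    · simp only [ContinuousLinearMap.add_apply, ContinuousLinearMap.smul_apply,
        ContinuousLinearMap.sub_apply, pj_apply, smul_eq_mul]
      ring
    · simp
  unfold Df Qf
  rw [ContinuousLinearMap.smul_apply, ContinuousLinearMap.sum_apply]
  simp only [ContinuousLinearMap.sum_apply]
  rw [Finset.sum_congr rfl (fun i _ => Finset.sum_congr rfl (fun j _ => hpt i j))]
  simp only [← Finset.mul_sum, smul_eq_mul]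
  ring

lemma Df_zero (n : ℕ) : Df n (0 : Fin n → ℝ) = 0 := by
  unfold Df
  simp

lemma fderiv_invSum (n : ℕ) (hn : 1 ≤ n) (θ : Fin n → ℝ) :
    fderiv ℝ (invSum n) θ = Df n (θ - θstar n) := by
  have h1 : HasFDerivAt (Qf n) (Df n (θ - θstar n)) (θ - θstar n) :=
    hasFDerivAt_Qf n (θ - θstar n)
  have h2 : HasFDerivAt (fun θ : Fin n → ℝ => θ - θstar n)
      (ContinuousLinearMap.id ℝ (Fin n → ℝ)) θ := (hasFDerivAt_id θ).sub_const (θstar n)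
  have h3 := h1.comp θ h2
  rw [ContinuousLinearMap.comp_id] at h3
  have h4 : HasFDerivAt (fun θ : Fin n → ℝ => invSum n (θstar n) + Qf n (θ - θstar n))
      (Df n (θ - θstar n)) θ := h3.const_add _
  have hfun : invSum n = fun θ : Fin n → ℝ => invSum n (θstar n) + Qf n (θ - θstar n) :=
    funext (fun θ => key n hn θ)
  rw [hfun]
  exact h4.fderiv

/-- The quadratic function `F(θ₁,…,θₙ) = (1/2) Σ_{i<j}[θᵢ² + (θⱼ-θᵢ)² + (1-θⱼ)²]`
on `ℝⁿ` has vanishing gradient exactly at `θᵢ = (n+2(i-1))/(4n-2)`, and this point is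
its unique global minimizer. -/
theorem stmt_10 (n : ℕ) (hn : 2 ≤ n) :
    (∀ θ : Fin n → ℝ, fderiv ℝ (invSum n) θ = 0 ↔ θ = θstar n) ∧
    (∀ θ : Fin n → ℝ, θ ≠ θstar n → invSum n (θstar n) < invSum n θ) := by
  have hn1 : 1 ≤ n := by omega
  constructor
  · intro θ
    rw [fderiv_invSum n hn1 θ]
    constructor
    · intro h0
      by_contra hne
      have hvne : θ - θstar n ≠ 0 := sub_ne_zero.mpr hne
      have hpos := Qf_pos n hn (θ - θstar n) hvne
      have h2 : Df n (θ - θstar n) (θ - θstar n) = 0 := by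
        rw [h0]; exact ContinuousLinearMap.zero_apply _
      rw [Df_apply_self] at h2
      linarith
    · intro h
      subst h
      rw [sub_self, Df_zero]
  · intro θ hne
    have hk : invSum n θ = invSum n (θstar n) + Qf n (θ - θstar n) := key n hn1 θ
    have hvne : θ - θstar n ≠ 0 := sub_ne_zero.mpr hne
    have hpos := Qf_pos n hn (θ - θstar n) hvne
    linarith
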